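/- Let τ₁(x,y) = x + iy + √3, L₁φ = (Dₓ² + (1/√3)Dₓ + (i/√3)Dᵧ) φ·τ₁, and G₁η = −(Dₓ² + (1/√3)Dₓ + (i/√3)Dᵧ) 1·η. Suppose η, φ : ℝ² → ℂ are smooth, η satisfies (−Dₓ² + Dₓ⁴ − Dᵧ²) η·τ₁ = 0 on ℝ², and φ satisfies, at every point where τ₁ ≠ 0, the third-order ODE 4∂ₓ³φ·τ₁ + (2√3 τ₁ − 12)∂ₓ²φ + (−4√3 + 12/τ₁)∂ₓφ = F₁ with F₁ = −2∂ₓ³η + 2√3 i ∂ₓ∂ᵧη − (6/τ₁)G₁η. Define Φ₀ = L₁φ − G₁η. Then at every point where τ₁ ≠ 0: ∂ₓ³Φ₀ = (−√3/2 + 6/τ₁)∂ₓ²Φ₀ + (1/τ₁)(2√3 − 15/τ₁)∂ₓΦ₀ + (1/τ₁²)(15/τ₁ − 2√3)Φ₀. -/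

import Mathlib

open Complex

/-- Hirota bilinear derivative `Dₓ^m Dᵧ^n f·g` for functions of `(x,y) ∈ ℝ²`. -/
noncomputable def hirota (m n : ℕ) (f g : ℝ × ℝ → ℂ) (p : ℝ × ℝ) : ℂ :=
  iteratedDeriv m (fun a =>
    iteratedDeriv n (fun b =>
      f (p.1 + a, p.2 + b) * g (p.1 - a, p.2 - b)) 0) 0

/-- `τ₁(x,y) = x + iy + √3`. -/
noncomputable def tau1 (p : ℝ × ℝ) : ℂ :=
  (p.1 : ℂ) + (p.2 : ℂ) * I + (Real.sqrt 3 : ℂ)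

/-- Partial derivative in x, for complex valued functions. -/
noncomputable def cdx (f : ℝ × ℝ → ℂ) (p : ℝ × ℝ) : ℂ :=
  deriv (fun x => f (x, p.2)) p.1

/-- Partial derivative in y, for complex valued functions. -/
noncomputable def cdy (f : ℝ × ℝ → ℂ) (p : ℝ × ℝ) : ℂ :=
  deriv (fun y => f (p.1, y)) p.2

/-- `L₁φ = (Dₓ² + (1/√3)Dₓ + (i/√3)Dᵧ) φ·τ₁`. -/
noncomputable def L1 (φ : ℝ × ℝ → ℂ) (p : ℝ × ℝ) : ℂ :=
  hirota 2 0 φ tau1 p + (1 / (Real.sqrt 3 : ℂ)) * hirota 1 0 φ tau1 p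
    + (I / (Real.sqrt 3 : ℂ)) * hirota 0 1 φ tau1 p

/-- `G₁η = −(Dₓ² + (1/√3)Dₓ + (i/√3)Dᵧ) 1·η`. -/
noncomputable def G1 (η : ℝ × ℝ → ℂ) (p : ℝ × ℝ) : ℂ :=
  -(hirota 2 0 (fun _ => 1) η p + (1 / (Real.sqrt 3 : ℂ)) * hirota 1 0 (fun _ => 1) η p
    + (I / (Real.sqrt 3 : ℂ)) * hirota 0 1 (fun _ => 1) η p)


noncomputable def pdx (f : ℝ × ℝ → ℂ) : ℝ × ℝ → ℂ := fun p => fderiv ℝ f p (1, 0)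
noncomputable def pdy (f : ℝ × ℝ → ℂ) : ℝ × ℝ → ℂ := fun p => fderiv ℝ f p (0, 1)

lemma infsucc : ((⊤:ℕ∞) : WithTop ℕ∞) + 1 ≤ ((⊤:ℕ∞) : WithTop ℕ∞) := by norm_cast
lemma one_le_inf : ((⊤:ℕ∞) : WithTop ℕ∞) ≠ 0 := by simp

lemma ContDiff.pdx' {f : ℝ × ℝ → ℂ} (hf : ContDiff ℝ (⊤ : ℕ∞) f) : ContDiff ℝ (⊤ : ℕ∞) (pdx f) :=
  (hf.fderiv_right infsucc).clm_apply contDiff_const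

lemma ContDiff.pdy' {f : ℝ × ℝ → ℂ} (hf : ContDiff ℝ (⊤ : ℕ∞) f) : ContDiff ℝ (⊤ : ℕ∞) (pdy f) :=
  (hf.fderiv_right infsucc).clm_apply contDiff_const

lemma pdxn_smooth {f : ℝ × ℝ → ℂ} (hf : ContDiff ℝ (⊤ : ℕ∞) f) (m : ℕ) :
    ContDiff ℝ (⊤ : ℕ∞) (pdx^[m] f) := by
  induction m with
  | zero => exact hf
  | succ k ih => rw [Function.iterate_succ_apply']; exact ih.pdx'

lemma pdyn_smooth {f : ℝ × ℝ → ℂ} (hf : ContDiff ℝ (⊤ : ℕ∞) f) (n : ℕ) :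
    ContDiff ℝ (⊤ : ℕ∞) (pdy^[n] f) := by
  induction n with
  | zero => exact hf
  | succ k ih => rw [Function.iterate_succ_apply']; exact ih.pdy'

lemma lineX {f : ℝ × ℝ → ℂ} (hf : ContDiff ℝ (⊤ : ℕ∞) f) (p : ℝ × ℝ) :
    HasDerivAt (fun x => f (x, p.2)) (pdx f p) p.1 := by
  have h1 : HasFDerivAt f (fderiv ℝ f p) ((fun x : ℝ => ((x, p.2) : ℝ × ℝ)) p.1) :=
    (hf.differentiable one_le_inf p).hasFDerivAt
  have h2 : HasDerivAt (fun x : ℝ => ((x, p.2) : ℝ × ℝ)) ((1 : ℝ), (0 : ℝ)) p.1 :=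
    (hasDerivAt_id p.1).prodMk (hasDerivAt_const p.1 p.2)
  exact h1.comp_hasDerivAt p.1 h2

lemma lineY {f : ℝ × ℝ → ℂ} (hf : ContDiff ℝ (⊤ : ℕ∞) f) (p : ℝ × ℝ) :
    HasDerivAt (fun y => f (p.1, y)) (pdy f p) p.2 := by
  have h1 : HasFDerivAt f (fderiv ℝ f p) ((fun y : ℝ => ((p.1, y) : ℝ × ℝ)) p.2) :=
    (hf.differentiable one_le_inf p).hasFDerivAt
  have h2 : HasDerivAt (fun y : ℝ => ((p.1, y) : ℝ × ℝ)) ((0 : ℝ), (1 : ℝ)) p.2 :=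
    (hasDerivAt_const p.2 p.1).prodMk (hasDerivAt_id p.2)
  exact h1.comp_hasDerivAt p.2 h2

lemma cdx_eqf {f : ℝ × ℝ → ℂ} (hf : ContDiff ℝ (⊤ : ℕ∞) f) : cdx f = pdx f :=
  funext fun p => (lineX hf p).deriv

lemma cdy_eqf {f : ℝ × ℝ → ℂ} (hf : ContDiff ℝ (⊤ : ℕ∞) f) : cdy f = pdy f :=
  funext fun p => (lineY hf p).deriv

lemma pdy_pdx {f : ℝ × ℝ → ℂ} (hf : ContDiff ℝ (⊤ : ℕ∞) f) :
    pdy (pdx f) = pdx (pdy f) := by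
  funext p
  have hdf : ∀ q, HasFDerivAt f (fderiv ℝ f q) q := fun q =>
    (hf.differentiable one_le_inf q).hasFDerivAt
  have hd2 : HasFDerivAt (fderiv ℝ f) (fderiv ℝ (fderiv ℝ f) p) p :=
    (((hf.fderiv_right infsucc).differentiable one_le_inf) p).hasFDerivAt
  have hsymm := second_derivative_symmetric hdf hd2 ((1:ℝ),(0:ℝ)) ((0:ℝ),(1:ℝ))
  have hdiff : DifferentiableAt ℝ (fderiv ℝ f) p :=
    ((hf.fderiv_right infsucc).differentiable one_le_inf) p
  have e1 : pdy (pdx f) p = fderiv ℝ (fderiv ℝ f) p ((0:ℝ),(1:ℝ)) ((1:ℝ),(0:ℝ)) := by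
    show fderiv ℝ (fun q => fderiv ℝ f q ((1:ℝ),(0:ℝ))) p ((0:ℝ),(1:ℝ)) = _
    rw [fderiv_clm_apply hdiff (differentiableAt_const _)]
    simp
  have e2 : pdx (pdy f) p = fderiv ℝ (fderiv ℝ f) p ((1:ℝ),(0:ℝ)) ((0:ℝ),(1:ℝ)) := by
    show fderiv ℝ (fun q => fderiv ℝ f q ((0:ℝ),(1:ℝ))) p ((1:ℝ),(0:ℝ)) = _
    rw [fderiv_clm_apply hdiff (differentiableAt_const _)]
    simp
  rw [e1, e2, hsymm]

lemma hasDerivAt_ofReal (a : ℝ) : HasDerivAt (fun t : ℝ => (t : ℂ)) 1 a := by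
  simpa using (hasDerivAt_id a).ofReal_comp

lemma lineX_tau1 (p : ℝ × ℝ) : HasDerivAt (fun x => tau1 (x, p.2)) 1 p.1 :=
  ((hasDerivAt_ofReal p.1).add_const ((p.2 : ℂ) * I)).add_const ((Real.sqrt 3 : ℂ))

lemma lineY_tau1 (p : ℝ × ℝ) : HasDerivAt (fun y => tau1 (p.1, y)) I p.2 := by
  have h := (((hasDerivAt_ofReal p.2).mul_const I).const_add ((p.1 : ℂ))).add_const
    ((Real.sqrt 3 : ℂ))
  simp only [one_mul] at h
  exact h

lemma tau1_shift_x (p : ℝ × ℝ) (a : ℝ) : tau1 (p.1 - a, p.2) = tau1 p - a := by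
  simp only [tau1]; push_cast; ring

lemma tau1_shift_y (p : ℝ × ℝ) (b : ℝ) : tau1 (p.1, p.2 - b) = tau1 p - b * I := by
  simp only [tau1]; push_cast; ring

lemma continuous_tau1 : Continuous tau1 := by unfold tau1; fun_prop

lemma cdx_zero_on {F : ℝ × ℝ → ℂ} {p : ℝ × ℝ}
    (h : ∀ q : ℝ × ℝ, tau1 q ≠ 0 → F q = 0) (hp : tau1 p ≠ 0) :
    cdx F p = 0 := by
  have hcont : Continuous fun x : ℝ => tau1 (x, p.2) :=
    continuous_tau1.comp (by fun_prop)
  have hopen : IsOpen {x : ℝ | tau1 (x, p.2) ≠ 0} :=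
    IsOpen.preimage hcont isOpen_compl_singleton
  have hev : ∀ᶠ x in nhds p.1, F (x, p.2) = (fun _ : ℝ => (0:ℂ)) x :=
    Filter.eventually_of_mem (hopen.mem_nhds hp) (fun x hx => h _ hx)
  show deriv (fun x => F (x, p.2)) p.1 = 0
  rw [Filter.EventuallyEq.deriv_eq hev, deriv_const]

lemma cdy_zero_on {F : ℝ × ℝ → ℂ} {p : ℝ × ℝ}
    (h : ∀ q : ℝ × ℝ, tau1 q ≠ 0 → F q = 0) (hp : tau1 p ≠ 0) :
    cdy F p = 0 := by
  have hcont : Continuous fun y : ℝ => tau1 (p.1, y) :=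
    continuous_tau1.comp (by fun_prop)
  have hopen : IsOpen {y : ℝ | tau1 (p.1, y) ≠ 0} :=
    IsOpen.preimage hcont isOpen_compl_singleton
  have hev : ∀ᶠ y in nhds p.2, F (p.1, y) = (fun _ : ℝ => (0:ℂ)) y :=
    Filter.eventually_of_mem (hopen.mem_nhds hp) (fun y hy => h _ hy)
  show deriv (fun y => F (p.1, y)) p.2 = 0
  rw [Filter.EventuallyEq.deriv_eq hev, deriv_const]

lemma cdx_zerofn (p : ℝ × ℝ) : cdx (fun _ : ℝ × ℝ => (0:ℂ)) p = 0 := by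
  show deriv (fun _ : ℝ => (0:ℂ)) p.1 = 0
  exact deriv_const _ _

lemma lineX_shift {f : ℝ × ℝ → ℂ} (hf : ContDiff ℝ (⊤ : ℕ∞) f) (p : ℝ × ℝ) (a : ℝ) :
    HasDerivAt (fun t => f (p.1 + t, p.2)) (pdx f (p.1 + a, p.2)) a := by
  have h1 : HasFDerivAt f (fderiv ℝ f (p.1 + a, p.2))
      ((fun t : ℝ => ((p.1 + t, p.2) : ℝ × ℝ)) a) :=
    (hf.differentiable one_le_inf _).hasFDerivAt
  have h2 : HasDerivAt (fun t : ℝ => ((p.1 + t, p.2) : ℝ × ℝ)) ((1 : ℝ), (0 : ℝ)) a :=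
    ((hasDerivAt_id a).const_add p.1).prodMk (hasDerivAt_const a p.2)
  exact h1.comp_hasDerivAt a h2

lemma lineX_negshift {f : ℝ × ℝ → ℂ} (hf : ContDiff ℝ (⊤ : ℕ∞) f) (p : ℝ × ℝ) (a : ℝ) :
    HasDerivAt (fun t => f (p.1 - t, p.2)) (-pdx f (p.1 - a, p.2)) a := by
  have h1 : HasFDerivAt f (fderiv ℝ f (p.1 - a, p.2))
      ((fun t : ℝ => ((p.1 - t, p.2) : ℝ × ℝ)) a) :=
    (hf.differentiable one_le_inf _).hasFDerivAt
  have h2 : HasDerivAt (fun t : ℝ => ((p.1 - t, p.2) : ℝ × ℝ)) ((-1 : ℝ), (0 : ℝ)) a :=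
    ((hasDerivAt_id a).const_sub p.1).prodMk (hasDerivAt_const a p.2)
  have h3 := h1.comp_hasDerivAt a h2
  have h4 : fderiv ℝ f (p.1 - a, p.2) ((-1 : ℝ), (0 : ℝ)) = -pdx f (p.1 - a, p.2) := by
    have : ((-1 : ℝ), (0 : ℝ)) = -((1 : ℝ), (0 : ℝ)) := by
      exact Prod.ext (by norm_num) (by norm_num)
    rw [this, map_neg]; rfl
  rw [h4] at h3
  exact h3

lemma lineY_shift {f : ℝ × ℝ → ℂ} (hf : ContDiff ℝ (⊤ : ℕ∞) f) (p : ℝ × ℝ) (b : ℝ) :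
    HasDerivAt (fun t => f (p.1, p.2 + t)) (pdy f (p.1, p.2 + b)) b := by
  have h1 : HasFDerivAt f (fderiv ℝ f (p.1, p.2 + b))
      ((fun t : ℝ => ((p.1, p.2 + t) : ℝ × ℝ)) b) :=
    (hf.differentiable one_le_inf _).hasFDerivAt
  have h2 : HasDerivAt (fun t : ℝ => ((p.1, p.2 + t) : ℝ × ℝ)) ((0 : ℝ), (1 : ℝ)) b :=
    (hasDerivAt_const b p.1).prodMk ((hasDerivAt_id b).const_add p.2)
  exact h1.comp_hasDerivAt b h2

lemma lineY_negshift {f : ℝ × ℝ → ℂ} (hf : ContDiff ℝ (⊤ : ℕ∞) f) (p : ℝ × ℝ) (b : ℝ) :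
    HasDerivAt (fun t => f (p.1, p.2 - t)) (-pdy f (p.1, p.2 - b)) b := by
  have h1 : HasFDerivAt f (fderiv ℝ f (p.1, p.2 - b))
      ((fun t : ℝ => ((p.1, p.2 - t) : ℝ × ℝ)) b) :=
    (hf.differentiable one_le_inf _).hasFDerivAt
  have h2 : HasDerivAt (fun t : ℝ => ((p.1, p.2 - t) : ℝ × ℝ)) ((0 : ℝ), (-1 : ℝ)) b :=
    (hasDerivAt_const b p.1).prodMk ((hasDerivAt_id b).const_sub p.2)
  have h3 := h1.comp_hasDerivAt b h2
  have h4 : fderiv ℝ f (p.1, p.2 - b) ((0 : ℝ), (-1 : ℝ)) = -pdy f (p.1, p.2 - b) := by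
    have : ((0 : ℝ), (-1 : ℝ)) = -((0 : ℝ), (1 : ℝ)) := by
      exact Prod.ext (by norm_num) (by norm_num)
    rw [this, map_neg]; rfl
  rw [h4] at h3
  exact h3

lemma iter_x {f : ℝ × ℝ → ℂ} (hf : ContDiff ℝ (⊤ : ℕ∞) f) (p : ℝ × ℝ) (m : ℕ) : ∀ a : ℝ,
    iteratedDeriv m (fun t : ℝ => f (p.1 + t, p.2) * (tau1 p - (t : ℂ))) a
      = pdx^[m] f (p.1 + a, p.2) * (tau1 p - a) - (m : ℂ) * pdx^[m-1] f (p.1 + a, p.2) := by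
  induction m with
  | zero => intro a; simp [iteratedDeriv_zero]
  | succ k ih =>
    intro a
    rw [iteratedDeriv_succ]
    have e : iteratedDeriv k (fun t : ℝ => f (p.1 + t, p.2) * (tau1 p - (t : ℂ)))
        = fun t : ℝ => pdx^[k] f (p.1 + t, p.2) * (tau1 p - (t:ℂ))
            - (k : ℂ) * pdx^[k-1] f (p.1 + t, p.2) := funext ih
    rw [e]
    have h := ((lineX_shift (pdxn_smooth hf k) p a).mul
        ((hasDerivAt_ofReal a).const_sub (tau1 p))).sub
      ((lineX_shift (pdxn_smooth hf (k-1)) p a).const_mul ((k : ℂ)))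
    have h' : HasDerivAt (fun t : ℝ => pdx^[k] f (p.1 + t, p.2) * (tau1 p - (t:ℂ))
            - (k : ℂ) * pdx^[k-1] f (p.1 + t, p.2)) _ a := h
    rw [h'.deriv]
    rcases k with _ | j
    · simp only [Function.iterate_succ_apply', Function.iterate_zero_apply, Nat.add_sub_cancel,
        Nat.zero_sub, Nat.sub_self]
      push_cast
      ring
    · simp only [Function.iterate_succ_apply', Nat.succ_sub_one, Nat.add_sub_cancel]
      push_cast
      ring

lemma iter_y {f : ℝ × ℝ → ℂ} (hf : ContDiff ℝ (⊤ : ℕ∞) f) (p : ℝ × ℝ) (n : ℕ) : ∀ b : ℝ,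
    iteratedDeriv n (fun t : ℝ => f (p.1, p.2 + t) * (tau1 p - (t : ℂ) * I)) b
      = pdy^[n] f (p.1, p.2 + b) * (tau1 p - b * I)
        - (n : ℂ) * I * pdy^[n-1] f (p.1, p.2 + b) := by
  induction n with
  | zero => intro b; simp [iteratedDeriv_zero]
  | succ k ih =>
    intro b
    rw [iteratedDeriv_succ]
    have e : iteratedDeriv k (fun t : ℝ => f (p.1, p.2 + t) * (tau1 p - (t : ℂ) * I))
        = fun t : ℝ => pdy^[k] f (p.1, p.2 + t) * (tau1 p - (t:ℂ) * I)
            - (k : ℂ) * I * pdy^[k-1] f (p.1, p.2 + t) := funext ih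
    rw [e]
    have h := ((lineY_shift (pdyn_smooth hf k) p b).mul
        (((hasDerivAt_ofReal b).mul_const I).const_sub (tau1 p))).sub
      ((lineY_shift (pdyn_smooth hf (k-1)) p b).const_mul ((k : ℂ) * I))
    have h' : HasDerivAt (fun t : ℝ => pdy^[k] f (p.1, p.2 + t) * (tau1 p - (t:ℂ) * I)
            - (k : ℂ) * I * pdy^[k-1] f (p.1, p.2 + t)) _ b := h
    rw [h'.deriv]
    rcases k with _ | j
    · simp only [Function.iterate_succ_apply', Function.iterate_zero_apply, Nat.add_sub_cancel,
        Nat.zero_sub, Nat.sub_self]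
      push_cast
      ring
    · simp only [Function.iterate_succ_apply', Nat.succ_sub_one, Nat.add_sub_cancel]
      push_cast
      ring

lemma iter_negx {f : ℝ × ℝ → ℂ} (hf : ContDiff ℝ (⊤ : ℕ∞) f) (p : ℝ × ℝ) (m : ℕ) : ∀ a : ℝ,
    iteratedDeriv m (fun t : ℝ => f (p.1 - t, p.2)) a
      = (-1 : ℂ)^m * pdx^[m] f (p.1 - a, p.2) := by
  induction m with
  | zero => intro a; simp [iteratedDeriv_zero]
  | succ k ih =>
    intro a
    rw [iteratedDeriv_succ]
    have e : iteratedDeriv k (fun t : ℝ => f (p.1 - t, p.2))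
        = fun t : ℝ => (-1 : ℂ)^k * pdx^[k] f (p.1 - t, p.2) := funext ih
    rw [e]
    have h := (lineX_negshift (pdxn_smooth hf k) p a).const_mul ((-1 : ℂ)^k)
    have h' : HasDerivAt (fun t : ℝ => (-1 : ℂ)^k * pdx^[k] f (p.1 - t, p.2)) _ a := h
    rw [h'.deriv]
    simp only [Function.iterate_succ_apply']
    ring

lemma iter_negy {f : ℝ × ℝ → ℂ} (hf : ContDiff ℝ (⊤ : ℕ∞) f) (p : ℝ × ℝ) (n : ℕ) : ∀ b : ℝ,
    iteratedDeriv n (fun t : ℝ => f (p.1, p.2 - t)) b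
      = (-1 : ℂ)^n * pdy^[n] f (p.1, p.2 - b) := by
  induction n with
  | zero => intro b; simp [iteratedDeriv_zero]
  | succ k ih =>
    intro b
    rw [iteratedDeriv_succ]
    have e : iteratedDeriv k (fun t : ℝ => f (p.1, p.2 - t))
        = fun t : ℝ => (-1 : ℂ)^k * pdy^[k] f (p.1, p.2 - t) := funext ih
    rw [e]
    have h := (lineY_negshift (pdyn_smooth hf k) p b).const_mul ((-1 : ℂ)^k)
    have h' : HasDerivAt (fun t : ℝ => (-1 : ℂ)^k * pdy^[k] f (p.1, p.2 - t)) _ b := h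
    rw [h'.deriv]
    simp only [Function.iterate_succ_apply']
    ring

lemma hirota_x_tau {f : ℝ × ℝ → ℂ} (hf : ContDiff ℝ (⊤ : ℕ∞) f) (p : ℝ × ℝ) (m : ℕ) :
    hirota m 0 f tau1 p = pdx^[m] f p * tau1 p - (m : ℂ) * pdx^[m-1] f p := by
  unfold hirota
  simp only [iteratedDeriv_zero]
  have e : (fun a : ℝ => f (p.1 + a, p.2 + 0) * tau1 (p.1 - a, p.2 - 0))
      = fun a : ℝ => f (p.1 + a, p.2) * (tau1 p - (a : ℂ)) := by
    funext a; rw [add_zero, sub_zero, tau1_shift_x]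
  rw [e, iter_x hf p m 0]
  norm_num

lemma hirota_y_tau {f : ℝ × ℝ → ℂ} (hf : ContDiff ℝ (⊤ : ℕ∞) f) (p : ℝ × ℝ) (n : ℕ) :
    hirota 0 n f tau1 p = pdy^[n] f p * tau1 p - (n : ℂ) * I * pdy^[n-1] f p := by
  unfold hirota
  simp only [iteratedDeriv_zero]
  have e : (fun b : ℝ => f (p.1 + 0, p.2 + b) * tau1 (p.1 - 0, p.2 - b))
      = fun b : ℝ => f (p.1, p.2 + b) * (tau1 p - (b : ℂ) * I) := by
    funext b; rw [add_zero, sub_zero, tau1_shift_y]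
  rw [e, iter_y hf p n 0]
  norm_num

lemma hirota_x_one {f : ℝ × ℝ → ℂ} (hf : ContDiff ℝ (⊤ : ℕ∞) f) (p : ℝ × ℝ) (m : ℕ) :
    hirota m 0 (fun _ => (1:ℂ)) f p = (-1 : ℂ)^m * pdx^[m] f p := by
  unfold hirota
  simp only [iteratedDeriv_zero, one_mul]
  have e : (fun a : ℝ => f (p.1 - a, p.2 - 0)) = fun a : ℝ => f (p.1 - a, p.2) := by
    funext a; rw [sub_zero]
  rw [e, iter_negx hf p m 0]
  norm_num

lemma hirota_y_one {f : ℝ × ℝ → ℂ} (hf : ContDiff ℝ (⊤ : ℕ∞) f) (p : ℝ × ℝ) (n : ℕ) :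
    hirota 0 n (fun _ => (1:ℂ)) f p = (-1 : ℂ)^n * pdy^[n] f p := by
  unfold hirota
  simp only [iteratedDeriv_zero, one_mul]
  have e : (fun b : ℝ => f (p.1 - 0, p.2 - b)) = fun b : ℝ => f (p.1, p.2 - b) := by
    funext b; rw [sub_zero]
  rw [e, iter_negy hf p n 0]
  norm_num

lemma it1 (f : (ℝ × ℝ → ℂ) → (ℝ × ℝ → ℂ)) (g : ℝ × ℝ → ℂ) : f^[1] g = f g := rfl
lemma it2 (f : (ℝ × ℝ → ℂ) → (ℝ × ℝ → ℂ)) (g : ℝ × ℝ → ℂ) : f^[2] g = f (f g) := rfl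
lemma it3 (f : (ℝ × ℝ → ℂ) → (ℝ × ℝ → ℂ)) (g : ℝ × ℝ → ℂ) : f^[3] g = f (f (f g)) := rfl
lemma it4 (f : (ℝ × ℝ → ℂ) → (ℝ × ℝ → ℂ)) (g : ℝ × ℝ → ℂ) : f^[4] g = f (f (f (f g))) := rfl

noncomputable def PhiA (φ η : ℝ × ℝ → ℂ) : ℝ × ℝ → ℂ := fun p =>
  ((-1 : ℂ) * (Real.sqrt 3 : ℂ)⁻¹ * I) * (pdy η) p + ((-1 : ℂ) * (Real.sqrt 3 : ℂ)⁻¹) * (pdx η) p + (1 : ℂ) * (pdx (pdx η)) p + ((1 : ℂ) * (Real.sqrt 3 : ℂ)⁻¹ * I) * (tau1 p * ((pdy φ) p)) + (-2 : ℂ) * (pdx φ) p + ((1 : ℂ) * (Real.sqrt 3 : ℂ)⁻¹) * (tau1 p * ((pdx φ) p)) + (1 : ℂ) * (tau1 p * ((pdx (pdx φ)) p))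

noncomputable def PhiB (φ η : ℝ × ℝ → ℂ) : ℝ × ℝ → ℂ := fun p =>
  ((-1 : ℂ) * (Real.sqrt 3 : ℂ)⁻¹ * I) * (pdx (pdy η)) p + ((-1 : ℂ) * (Real.sqrt 3 : ℂ)⁻¹) * (pdx (pdx η)) p + (1 : ℂ) * (pdx (pdx (pdx η))) p + ((1 : ℂ) * (Real.sqrt 3 : ℂ)⁻¹ * I) * (pdy φ) p + ((1 : ℂ) * (Real.sqrt 3 : ℂ)⁻¹) * (pdx φ) p + ((1 : ℂ) * (Real.sqrt 3 : ℂ)⁻¹ * I) * (tau1 p * ((pdx (pdy φ)) p)) + (-1 : ℂ) * (pdx (pdx φ)) p + ((1 : ℂ) * (Real.sqrt 3 : ℂ)⁻¹) * (tau1 p * ((pdx (pdx φ)) p)) + (1 : ℂ) * (tau1 p * ((pdx (pdx (pdx φ))) p))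

noncomputable def PhiC (φ η : ℝ × ℝ → ℂ) : ℝ × ℝ → ℂ := fun p =>
  ((-1 : ℂ) * (Real.sqrt 3 : ℂ)⁻¹ * I) * (pdx (pdx (pdy η))) p + ((-1 : ℂ) * (Real.sqrt 3 : ℂ)⁻¹) * (pdx (pdx (pdx η))) p + (1 : ℂ) * (pdx (pdx (pdx (pdx η)))) p + ((2 : ℂ) * (Real.sqrt 3 : ℂ)⁻¹ * I) * (pdx (pdy φ)) p + ((2 : ℂ) * (Real.sqrt 3 : ℂ)⁻¹) * (pdx (pdx φ)) p + ((1 : ℂ) * (Real.sqrt 3 : ℂ)⁻¹ * I) * (tau1 p * ((pdx (pdx (pdy φ))) p)) + ((1 : ℂ) * (Real.sqrt 3 : ℂ)⁻¹) * (tau1 p * ((pdx (pdx (pdx φ))) p)) + (1 : ℂ) * (tau1 p * ((pdx (pdx (pdx (pdx φ)))) p))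

noncomputable def EE1 (φ η : ℝ × ℝ → ℂ) : ℝ × ℝ → ℂ := fun p =>
  ((6 : ℂ) * (Real.sqrt 3 : ℂ)⁻¹ * I) * (pdy η) p + ((6 : ℂ) * (Real.sqrt 3 : ℂ)⁻¹) * (pdx η) p + ((-6 : ℂ) * (Real.sqrt 3 : ℂ)⁻¹ * I) * (tau1 p * ((pdx (pdy η)) p)) + (-6 : ℂ) * (pdx (pdx η)) p + (2 : ℂ) * (tau1 p * ((pdx (pdx (pdx η))) p)) + (12 : ℂ) * (pdx φ) p + ((-12 : ℂ) * (Real.sqrt 3 : ℂ)⁻¹) * (tau1 p * ((pdx φ) p)) + (-12 : ℂ) * (tau1 p * ((pdx (pdx φ)) p)) + ((6 : ℂ) * (Real.sqrt 3 : ℂ)⁻¹) * (tau1 p * (tau1 p * ((pdx (pdx φ)) p))) + (4 : ℂ) * (tau1 p * (tau1 p * ((pdx (pdx (pdx φ))) p)))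

noncomputable def EE1x (φ η : ℝ × ℝ → ℂ) : ℝ × ℝ → ℂ := fun p =>
  ((6 : ℂ) * (Real.sqrt 3 : ℂ)⁻¹) * (pdx (pdx η)) p + ((-6 : ℂ) * (Real.sqrt 3 : ℂ)⁻¹ * I) * (tau1 p * ((pdx (pdx (pdy η))) p)) + (-4 : ℂ) * (pdx (pdx (pdx η))) p + (2 : ℂ) * (tau1 p * ((pdx (pdx (pdx (pdx η)))) p)) + ((-12 : ℂ) * (Real.sqrt 3 : ℂ)⁻¹) * (pdx φ) p + (-4 : ℂ) * (tau1 p * ((pdx (pdx (pdx φ))) p)) + ((6 : ℂ) * (Real.sqrt 3 : ℂ)⁻¹) * (tau1 p * (tau1 p * ((pdx (pdx (pdx φ))) p))) + (4 : ℂ) * (tau1 p * (tau1 p * ((pdx (pdx (pdx (pdx φ)))) p)))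

noncomputable def EE2 (φ η : ℝ × ℝ → ℂ) : ℝ × ℝ → ℂ := fun p =>
  ((2 : ℂ) * I) * (pdy η) p + (-1 : ℂ) * (tau1 p * ((pdy (pdy η)) p)) + (2 : ℂ) * (pdx η) p + (-1 : ℂ) * (tau1 p * ((pdx (pdx η)) p)) + (-4 : ℂ) * (pdx (pdx (pdx η))) p + (1 : ℂ) * (tau1 p * ((pdx (pdx (pdx (pdx η)))) p))

lemma phiAB {φ η : ℝ × ℝ → ℂ} (hφ : ContDiff ℝ (⊤ : ℕ∞) φ)
    (hη : ContDiff ℝ (⊤ : ℕ∞) η) :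
    ∀ p : ℝ × ℝ, cdx (PhiA φ η) p = PhiB φ η p := by
  intro p
  have h := ((((((((lineX (hη.pdy') p).const_mul ((-1 : ℂ) * (Real.sqrt 3 : ℂ)⁻¹ * I)).add ((lineX (hη.pdx') p).const_mul ((-1 : ℂ) * (Real.sqrt 3 : ℂ)⁻¹))).add ((lineX (hη.pdx'.pdx') p).const_mul ((1 : ℂ)))).add (((lineX_tau1 p).mul (lineX (hφ.pdy') p)).const_mul ((1 : ℂ) * (Real.sqrt 3 : ℂ)⁻¹ * I))).add ((lineX (hφ.pdx') p).const_mul ((-2 : ℂ)))).add (((lineX_tau1 p).mul (lineX (hφ.pdx') p)).const_mul ((1 : ℂ) * (Real.sqrt 3 : ℂ)⁻¹))).add (((lineX_tau1 p).mul (lineX (hφ.pdx'.pdx') p)).const_mul ((1 : ℂ))))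
  have h2 : HasDerivAt (fun x => PhiA φ η (x, p.2)) _ p.1 := h
  have h3 : cdx (PhiA φ η) p = _ := h2.deriv
  rw [h3]
  simp only [PhiB]
  ring

lemma phiBC {φ η : ℝ × ℝ → ℂ} (hφ : ContDiff ℝ (⊤ : ℕ∞) φ)
    (hη : ContDiff ℝ (⊤ : ℕ∞) η) :
    ∀ p : ℝ × ℝ, cdx (PhiB φ η) p = PhiC φ η p := by
  intro p
  have h := ((((((((((lineX (hη.pdy'.pdx') p).const_mul ((-1 : ℂ) * (Real.sqrt 3 : ℂ)⁻¹ * I)).add ((lineX (hη.pdx'.pdx') p).const_mul ((-1 : ℂ) * (Real.sqrt 3 : ℂ)⁻¹))).add ((lineX (hη.pdx'.pdx'.pdx') p).const_mul ((1 : ℂ)))).add ((lineX (hφ.pdy') p).const_mul ((1 : ℂ) * (Real.sqrt 3 : ℂ)⁻¹ * I))).add ((lineX (hφ.pdx') p).const_mul ((1 : ℂ) * (Real.sqrt 3 : ℂ)⁻¹))).add (((lineX_tau1 p).mul (lineX (hφ.pdy'.pdx') p)).const_mul ((1 : ℂ) * (Real.sqrt 3 : ℂ)⁻¹ * I))).add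 ((lineX (hφ.pdx'.pdx') p).const_mul ((-1 : ℂ)))).add (((lineX_tau1 p).mul (lineX (hφ.pdx'.pdx') p)).const_mul ((1 : ℂ) * (Real.sqrt 3 : ℂ)⁻¹))).add (((lineX_tau1 p).mul (lineX (hφ.pdx'.pdx'.pdx') p)).const_mul ((1 : ℂ))))
  have h2 : HasDerivAt (fun x => PhiB φ η (x, p.2)) _ p.1 := h
  have h3 : cdx (PhiB φ η) p = _ := h2.deriv
  rw [h3]
  simp only [PhiC]
  ring

lemma phiCD {φ η : ℝ × ℝ → ℂ} (hφ : ContDiff ℝ (⊤ : ℕ∞) φ)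
    (hη : ContDiff ℝ (⊤ : ℕ∞) η) :
    ∀ p : ℝ × ℝ, cdx (PhiC φ η) p = ((-1 : ℂ) * (Real.sqrt 3 : ℂ)⁻¹ * I) * (pdx (pdx (pdx (pdy η)))) p + ((-1 : ℂ) * (Real.sqrt 3 : ℂ)⁻¹) * (pdx (pdx (pdx (pdx η)))) p + (1 : ℂ) * (pdx (pdx (pdx (pdx (pdx η))))) p + ((3 : ℂ) * (Real.sqrt 3 : ℂ)⁻¹ * I) * (pdx (pdx (pdy φ))) p + ((3 : ℂ) * (Real.sqrt 3 : ℂ)⁻¹) * (pdx (pdx (pdx φ))) p + ((1 : ℂ) * (Real.sqrt 3 : ℂ)⁻¹ * I) * (tau1 p * ((pdx (pdx (pdx (pdy φ)))) p)) + (1 : ℂ) * (pdx (pdx (pdx (pdx φ)))) p + ((1 : ℂ) * (Real.sqrt 3 : ℂ)⁻¹) * (tau1 p * ((pdx (pdx (pdx (pdx φ)))) p)) + (1 : ℂ) * (tau1 p * ((pdx (pdx (pdx (pdx (pdx φ))))) p)) := by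
  intro p
  have h := (((((((((lineX (hη.pdy'.pdx'.pdx') p).const_mul ((-1 : ℂ) * (Real.sqrt 3 : ℂ)⁻¹ * I)).add ((lineX (hη.pdx'.pdx'.pdx') p).const_mul ((-1 : ℂ) * (Real.sqrt 3 : ℂ)⁻¹))).add ((lineX (hη.pdx'.pdx'.pdx'.pdx') p).const_mul ((1 : ℂ)))).add ((lineX (hφ.pdy'.pdx') p).const_mul ((2 : ℂ) * (Real.sqrt 3 : ℂ)⁻¹ * I))).add ((lineX (hφ.pdx'.pdx') p).const_mul ((2 : ℂ) * (Real.sqrt 3 : ℂ)⁻¹))).add (((lineX_tau1 p).mul (lineX (hφ.pdy'.pdx'.pdx') p)).const_mul ((1 : ℂ) * (Real.sqrt 3 : ℂ)⁻¹ * I))).add (((lineX_tau1 p).mul (lineX (hφ.pdx'.pdx'.pdx') p)).const_mul ((1 : ℂ) * (Real.sqrt 3 : ℂ)⁻¹))).add (((lineX_tau1 p).mul (lineX (hφ.pdx'.pdx'.pdx'.pdx') p)).const_mul ((1 : ℂ))))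
  have h2 : HasDerivAt (fun x => PhiC φ η (x, p.2)) _ p.1 := h
  have h3 : cdx (PhiC φ η) p = _ := h2.deriv
  rw [h3]
  ring

lemma e1x {φ η : ℝ × ℝ → ℂ} (hφ : ContDiff ℝ (⊤ : ℕ∞) φ)
    (hη : ContDiff ℝ (⊤ : ℕ∞) η) :
    ∀ p : ℝ × ℝ, cdx (EE1 φ η) p = EE1x φ η p := by
  intro p
  have h := (((((((((((lineX (hη.pdy') p).const_mul ((6 : ℂ) * (Real.sqrt 3 : ℂ)⁻¹ * I)).add ((lineX (hη.pdx') p).const_mul ((6 : ℂ) * (Real.sqrt 3 : ℂ)⁻¹))).add (((lineX_tau1 p).mul (lineX (hη.pdy'.pdx') p)).const_mul ((-6 : ℂ) * (Real.sqrt 3 : ℂ)⁻¹ * I))).add ((lineX (hη.pdx'.pdx') p).const_mul ((-6 : ℂ)))).add (((lineX_tau1 p).mul (lineX (hη.pdx'.pdx'.pdx') p)).const_mul ((2 : ℂ)))).add ((lineX (hφ.pdx') p).const_mul ((12 : ℂ)))).add (((lineX_tau1 p).mul (lineX (hφ.pdx') p)).const_mul ((-12 : ℂ) * (Real.sqrt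 3 : ℂ)⁻¹))).add (((lineX_tau1 p).mul (lineX (hφ.pdx'.pdx') p)).const_mul ((-12 : ℂ)))).add (((lineX_tau1 p).mul ((lineX_tau1 p).mul (lineX (hφ.pdx'.pdx') p))).const_mul ((6 : ℂ) * (Real.sqrt 3 : ℂ)⁻¹))).add (((lineX_tau1 p).mul ((lineX_tau1 p).mul (lineX (hφ.pdx'.pdx'.pdx') p))).const_mul ((4 : ℂ))))
  have h2 : HasDerivAt (fun x => EE1 φ η (x, p.2)) _ p.1 := h
  have h3 : cdx (EE1 φ η) p = _ := h2.deriv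
  rw [h3]
  simp only [EE1x]
  simp only [Prod.mk.eta, Pi.mul_apply]
  ring

lemma e1xx {φ η : ℝ × ℝ → ℂ} (hφ : ContDiff ℝ (⊤ : ℕ∞) φ)
    (hη : ContDiff ℝ (⊤ : ℕ∞) η) :
    ∀ p : ℝ × ℝ, cdx (EE1x φ η) p = ((-6 : ℂ) * (Real.sqrt 3 : ℂ)⁻¹ * I) * (pdx (pdx (pdy η))) p + ((6 : ℂ) * (Real.sqrt 3 : ℂ)⁻¹) * (pdx (pdx (pdx η))) p + ((-6 : ℂ) * (Real.sqrt 3 : ℂ)⁻¹ * I) * (tau1 p * ((pdx (pdx (pdx (pdy η)))) p)) + (-2 : ℂ) * (pdx (pdx (pdx (pdx η)))) p + (2 : ℂ) * (tau1 p * ((pdx (pdx (pdx (pdx (pdx η))))) p)) + ((-12 : ℂ) * (Real.sqrt 3 : ℂ)⁻¹) * (pdx (pdx φ)) p + (-4 : ℂ) * (pdx (pdx (pdx φ))) p + ((12 : ℂ) * (Real.sqrt 3 : ℂ)⁻¹) * (tau1 p * ((pdx (pdx (pdx φ))) p)) + (4 : ℂ) * (tau1 p * ((pdx (pdx (pdx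 (pdx φ)))) p)) + ((6 : ℂ) * (Real.sqrt 3 : ℂ)⁻¹) * (tau1 p * (tau1 p * ((pdx (pdx (pdx (pdx φ)))) p))) + (4 : ℂ) * (tau1 p * (tau1 p * ((pdx (pdx (pdx (pdx (pdx φ))))) p))) := by
  intro p
  have h := (((((((((lineX (hη.pdx'.pdx') p).const_mul ((6 : ℂ) * (Real.sqrt 3 : ℂ)⁻¹)).add (((lineX_tau1 p).mul (lineX (hη.pdy'.pdx'.pdx') p)).const_mul ((-6 : ℂ) * (Real.sqrt 3 : ℂ)⁻¹ * I))).add ((lineX (hη.pdx'.pdx'.pdx') p).const_mul ((-4 : ℂ)))).add (((lineX_tau1 p).mul (lineX (hη.pdx'.pdx'.pdx'.pdx') p)).const_mul ((2 : ℂ)))).add ((lineX (hφ.pdx') p).const_mul ((-12 : ℂ) * (Real.sqrt 3 : ℂ)⁻¹))).add (((lineX_tau1 p).mul (lineX (hφ.pdx'.pdx'.pdx') p)).const_mul ((-4 : ℂ)))).add (((lineX_tau1 p).mul ((lineX_tau1 p).mul (lineX (hφ.pdx'.pdx'.pdx') p))).const_mul ((6 : ℂ) * (Real.sqrt 3 :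 ℂ)⁻¹))).add (((lineX_tau1 p).mul ((lineX_tau1 p).mul (lineX (hφ.pdx'.pdx'.pdx'.pdx') p))).const_mul ((4 : ℂ))))
  have h2 : HasDerivAt (fun x => EE1x φ η (x, p.2)) _ p.1 := h
  have h3 : cdx (EE1x φ η) p = _ := h2.deriv
  rw [h3]
  simp only [Prod.mk.eta, Pi.mul_apply]
  ring

lemma e1y {φ η : ℝ × ℝ → ℂ} (hφ : ContDiff ℝ (⊤ : ℕ∞) φ)
    (hη : ContDiff ℝ (⊤ : ℕ∞) η) :
    ∀ p : ℝ × ℝ, cdy (EE1 φ η) p = ((6 : ℂ) * (Real.sqrt 3 : ℂ)⁻¹ * I) * (pdy (pdy η)) p + ((6 : ℂ) * (Real.sqrt 3 : ℂ)⁻¹) * (pdx (pdy η)) p + ((-6 : ℂ) * (Real.sqrt 3 : ℂ)⁻¹ * I ^ 2) * (pdx (pdy η)) p + ((-6 : ℂ) * (Real.sqrt 3 : ℂ)⁻¹ * I) * (tau1 p * ((pdx (pdy (pdy η))) p)) + (-6 : ℂ) * (pdx (pdx (pdy η))) p + ((2 : ℂ) * I) * (pdx (pdx (pdx η))) p + (2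 : ℂ) * (tau1 p * ((pdx (pdx (pdx (pdy η)))) p)) + ((-12 : ℂ) * (Real.sqrt 3 : ℂ)⁻¹ * I) * (pdx φ) p + (12 : ℂ) * (pdx (pdy φ)) p + ((-12 : ℂ) * (Real.sqrt 3 : ℂ)⁻¹) * (tau1 p * ((pdx (pdy φ)) p)) + ((-12 : ℂ) * I) * (pdx (pdx φ)) p + ((12 : ℂ) * (Real.sqrt 3 : ℂ)⁻¹ * I) * (tau1 p * ((pdx (pdx φ)) p)) + (-12 : ℂ) * (tau1 p * ((pdx (pdx (pdy φ))) p)) + ((6 : ℂ) * (Real.sqrt 3 : ℂ)⁻¹) * (tau1 p * (tau1 p * ((pdx (pdx (pdy φ))) p))) + ((8 : ℂ) * I) * (tau1 p * ((pdx (pdx (pdx φ))) p)) + (4 : ℂ) * (tau1 p * (tau1 p * ((pdx (pdx (pdx (pdy φ)))) p))) := by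
  intro p
  have h := (((((((((((lineY (hη.pdy') p).const_mul ((6 : ℂ) * (Real.sqrt 3 : ℂ)⁻¹ * I)).add ((lineY (hη.pdx') p).const_mul ((6 : ℂ) * (Real.sqrt 3 : ℂ)⁻¹))).add (((lineY_tau1 p).mul (lineY (hη.pdy'.pdx') p)).const_mul ((-6 : ℂ) * (Real.sqrt 3 : ℂ)⁻¹ * I))).add ((lineY (hη.pdx'.pdx') p).const_mul ((-6 : ℂ)))).add (((lineY_tau1 p).mul (lineY (hη.pdx'.pdx'.pdx') p)).const_mul ((2 : ℂ)))).add ((lineY (hφ.pdx') p).const_mul ((12 : ℂ)))).add (((lineY_tau1 p).mul (lineY (hφ.pdx') p)).const_mul ((-12 : ℂ) * (Real.sqrt 3 : ℂ)⁻¹))).add (((lineY_tau1 p).mul (lineY (hφ.pdx'.pdx') p)).const_mul ((-12 : ℂ)))).add (((lineY_tau1 p).mul ((lineY_tau1 p).mul (lineY (hφ.pdx'.pdx') p))).const_mul ((6 : ℂ) * (Real.sqrt 3 : ℂ)⁻¹))).add (((lineY_tau1 p).mul ((lineY_tau1 p).mul (lineY (hφ.pdx'.pdx'.pdx') p))).const_mul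 ((4 : ℂ))))
  have h2 : HasDerivAt (fun y => EE1 φ η (p.1, y)) _ p.2 := h
  have h3 : cdy (EE1 φ η) p = _ := h2.deriv
  rw [h3]
  simp only [Prod.mk.eta, Pi.mul_apply]
  have c_eta_1_0 : pdy (pdx η) = pdx (pdy η) := pdy_pdx (hη)
  have c_eta_2_0 : pdy (pdx (pdx η)) = pdx (pdx (pdy η)) := by
    rw [pdy_pdx (hη.pdx'), c_eta_1_0]
  have c_eta_3_0 : pdy (pdx (pdx (pdx η))) = pdx (pdx (pdx (pdy η))) := by
    rw [pdy_pdx (hη.pdx'.pdx'), c_eta_2_0]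
  have c_eta_1_1 : pdy (pdx (pdy η)) = pdx (pdy (pdy η)) := pdy_pdx (hη.pdy')
  have c_phi_1_0 : pdy (pdx φ) = pdx (pdy φ) := pdy_pdx (hφ)
  have c_phi_2_0 : pdy (pdx (pdx φ)) = pdx (pdx (pdy φ)) := by
    rw [pdy_pdx (hφ.pdx'), c_phi_1_0]
  have c_phi_3_0 : pdy (pdx (pdx (pdx φ))) = pdx (pdx (pdx (pdy φ))) := by
    rw [pdy_pdx (hφ.pdx'.pdx'), c_phi_2_0]
  rw [c_eta_1_0, c_eta_1_1, c_eta_2_0, c_eta_3_0, c_phi_1_0, c_phi_2_0, c_phi_3_0]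
  ring

lemma e2x {φ η : ℝ × ℝ → ℂ} (hφ : ContDiff ℝ (⊤ : ℕ∞) φ)
    (hη : ContDiff ℝ (⊤ : ℕ∞) η) :
    ∀ p : ℝ × ℝ, cdx (EE2 φ η) p = (-1 : ℂ) * (pdy (pdy η)) p + ((2 : ℂ) * I) * (pdx (pdy η)) p + (-1 : ℂ) * (tau1 p * ((pdx (pdy (pdy η))) p)) + (1 : ℂ) * (pdx (pdx η)) p + (-1 : ℂ) * (tau1 p * ((pdx (pdx (pdx η))) p)) + (-3 : ℂ) * (pdx (pdx (pdx (pdx η)))) p + (1 : ℂ) * (tau1 p * ((pdx (pdx (pdx (pdx (pdx η))))) p)) := by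
  intro p
  have h := (((((((lineX (hη.pdy') p).const_mul ((2 : ℂ) * I)).add (((lineX_tau1 p).mul (lineX (hη.pdy'.pdy') p)).const_mul ((-1 : ℂ)))).add ((lineX (hη.pdx') p).const_mul ((2 : ℂ)))).add (((lineX_tau1 p).mul (lineX (hη.pdx'.pdx') p)).const_mul ((-1 : ℂ)))).add ((lineX (hη.pdx'.pdx'.pdx') p).const_mul ((-4 : ℂ)))).add (((lineX_tau1 p).mul (lineX (hη.pdx'.pdx'.pdx'.pdx') p)).const_mul ((1 : ℂ))))
  have h2 : HasDerivAt (fun x => EE2 φ η (x, p.2)) _ p.1 := h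
  have h3 : cdx (EE2 φ η) p = _ := h2.deriv
  rw [h3]
  ring


/-- Compatibility: if `η` solves the linearized bilinear KP-I equation at `τ₁`
and `φ` solves the third-order ODE obtained by elimination, then
`Φ₀ = L₁φ − G₁η` solves an explicit homogeneous third-order ODE in `x`. -/
theorem Phi0_third_order_ode (η φ Φ₀ : ℝ × ℝ → ℂ)
    (hη : ContDiff ℝ (⊤ : ℕ∞) η) (hφ : ContDiff ℝ (⊤ : ℕ∞) φ)
    (hbil : ∀ p : ℝ × ℝ,
      -hirota 2 0 η tau1 p + hirota 4 0 η tau1 p - hirota 0 2 η tau1 p = 0)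
    (hode : ∀ p : ℝ × ℝ, tau1 p ≠ 0 →
      4 * cdx (cdx (cdx φ)) p * tau1 p
        + (2 * (Real.sqrt 3 : ℂ) * tau1 p - 12) * cdx (cdx φ) p
        + (-4 * (Real.sqrt 3 : ℂ) + 12 / tau1 p) * cdx φ p
      = -2 * cdx (cdx (cdx η)) p + 2 * (Real.sqrt 3 : ℂ) * I * cdx (cdy η) p
        - 6 / tau1 p * G1 η p)
    (hΦ₀ : Φ₀ = fun p => L1 φ p - G1 η p) :
    ∀ p : ℝ × ℝ, tau1 p ≠ 0 →
      cdx (cdx (cdx Φ₀)) p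
        = (-(Real.sqrt 3 : ℂ) / 2 + 6 / tau1 p) * cdx (cdx Φ₀) p
          + 1 / tau1 p * (2 * (Real.sqrt 3 : ℂ) - 15 / tau1 p) * cdx Φ₀ p
          + 1 / (tau1 p) ^ 2 * (15 / tau1 p - 2 * (Real.sqrt 3 : ℂ)) * Φ₀ p := by
  have hsne : (Real.sqrt 3 : ℂ) ≠ 0 := by
    rw [Complex.ofReal_ne_zero]
    positivity
  have hw : (Real.sqrt 3 : ℂ) * (Real.sqrt 3 : ℂ)⁻¹ = 1 := mul_inv_cancel₀ hsne
  have hs2 : (Real.sqrt 3 : ℂ) * (Real.sqrt 3 : ℂ) = 3 := by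
    rw [← Complex.ofReal_mul, Real.mul_self_sqrt (by norm_num)]
    norm_num
  -- G1 closed form
  have hG1 : ∀ q : ℝ × ℝ, G1 η q
      = -(pdx (pdx η) q) + (Real.sqrt 3 : ℂ)⁻¹ * pdx η q
          + (Real.sqrt 3 : ℂ)⁻¹ * (I * pdy η q) := by
    intro q
    simp only [G1]
    rw [hirota_x_one hη q 2, hirota_x_one hη q 1, hirota_y_one hη q 1]
    simp only [it1, it2]
    ring
  -- convert cdx/cdy to pdx/pdy in hode
  have ecφ0 : cdx φ = pdx φ := cdx_eqf hφ
  have ecφ1 : cdx (pdx φ) = pdx (pdx φ) := cdx_eqf hφ.pdx'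
  have ecφ2 : cdx (pdx (pdx φ)) = pdx (pdx (pdx φ)) := cdx_eqf hφ.pdx'.pdx'
  have ecη0 : cdx η = pdx η := cdx_eqf hη
  have ecη1 : cdx (pdx η) = pdx (pdx η) := cdx_eqf hη.pdx'
  have ecη2 : cdx (pdx (pdx η)) = pdx (pdx (pdx η)) := cdx_eqf hη.pdx'.pdx'
  have ecyη : cdy η = pdy η := cdy_eqf hη
  have ecxyη : cdx (pdy η) = pdx (pdy η) := cdx_eqf hη.pdy'
  simp only [ecφ0, ecφ1, ecφ2, ecη0, ecη1, ecη2, ecyη, ecxyη, hG1] at hode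
  -- Φ₀ closed form
  have hPhi : Φ₀ = PhiA φ η := by
    funext q
    simp only [hΦ₀, L1]
    rw [hG1 q, hirota_x_tau hφ q 2, hirota_x_tau hφ q 1, hirota_y_tau hφ q 1]
    norm_num [it1, it2, PhiA]
    linear_combination ((((-1 : ℂ) * (Real.sqrt 3 : ℂ)⁻¹ * φ q) * Complex.I_mul_I))
  -- the two bilinear relations as vanishing smooth functions
  have hRel1 : ∀ q : ℝ × ℝ, tau1 q ≠ 0 → EE1 φ η q = 0 := by
    intro q hq
    have h := hode q hq
    have hu : tau1 q * (tau1 q)⁻¹ = 1 := mul_inv_cancel₀ hq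
    simp only [EE1]
    linear_combination ((tau1 q * h + ((4 : ℂ) * (Real.sqrt 3 : ℂ)⁻¹ * tau1 q * (pdx φ) q + (-2 : ℂ) * (Real.sqrt 3 : ℂ)⁻¹ * tau1 q ^ 2 * (pdx (pdx φ)) q + (2 : ℂ) * (Real.sqrt 3 : ℂ)⁻¹ * I * tau1 q * (pdx (pdy η)) q) * hs2 + ((-4 : ℂ) * (Real.sqrt 3 : ℂ) * tau1 q * (pdx φ) q + (2 : ℂ) * (Real.sqrt 3 : ℂ) * tau1 q ^ 2 * (pdx (pdx φ)) q + (-2 : ℂ) * (Real.sqrt 3 : ℂ) * I * tau1 q * (pdx (pdy η)) q) * hw + ((6 : ℂ) * (pdx (pdx η)) q + (-12 : ℂ) * (pdx φ) q + (-6 : ℂ) * (Real.sqrt 3 : ℂ)⁻¹ * (pdx η) q + (-6 : ℂ) * (Real.sqrt 3 : ℂ)⁻¹ * I * (pdy η) q) * hu))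
  have hRel2 : ∀ q : ℝ × ℝ, EE2 φ η q = 0 := by
    intro q
    have h := hbil q
    rw [hirota_x_tau hη q 2, hirota_x_tau hη q 4, hirota_y_tau hη q 2] at h
    norm_num [it1, it2, it3, it4] at h
    simp only [EE2]
    linear_combination h
  -- derivatives of the relations
  have hRel1x : ∀ q : ℝ × ℝ, tau1 q ≠ 0 → EE1x φ η q = 0 := by
    intro q hq
    rw [← e1x hφ hη q]
    exact cdx_zero_on hRel1 hq
  have hRel1xx : ∀ q : ℝ × ℝ, tau1 q ≠ 0 → (((-6 : ℂ) * (Real.sqrt 3 : ℂ)⁻¹ * I) * (pdx (pdx (pdy η))) q + ((6 : ℂ) * (Real.sqrt 3 : ℂ)⁻¹) * (pdx (pdx (pdx η))) q + ((-6 : ℂ) * (Real.sqrt 3 : ℂ)⁻¹ * I) * (tau1 q * ((pdx (pdx (pdx (pdy η)))) q)) + (-2 : ℂ) * (pdx (pdx (pdx (pdx η)))) q + (2 : ℂ) * (tau1 q * ((pdx (pdx (pdx (pdx (pdx η))))) q)) + ((-12 : ℂ) * (Real.sqrt 3 : ℂ)⁻¹) * (pdx (pdx φ)) q + (-4 : ℂ)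 * (pdx (pdx (pdx φ))) q + ((12 : ℂ) * (Real.sqrt 3 : ℂ)⁻¹) * (tau1 q * ((pdx (pdx (pdx φ))) q)) + (4 : ℂ) * (tau1 q * ((pdx (pdx (pdx (pdx φ)))) q)) + ((6 : ℂ) * (Real.sqrt 3 : ℂ)⁻¹) * (tau1 q * (tau1 q * ((pdx (pdx (pdx (pdx φ)))) q))) + (4 : ℂ) * (tau1 q * (tau1 q * ((pdx (pdx (pdx (pdx (pdx φ))))) q)))) = 0 := by
    intro q hq
    rw [← e1xx hφ hη q]
    exact cdx_zero_on hRel1x hq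
  have hRel1y : ∀ q : ℝ × ℝ, tau1 q ≠ 0 → (((6 : ℂ) * (Real.sqrt 3 : ℂ)⁻¹ * I) * (pdy (pdy η)) q + ((6 : ℂ) * (Real.sqrt 3 : ℂ)⁻¹) * (pdx (pdy η)) q + ((-6 : ℂ) * (Real.sqrt 3 : ℂ)⁻¹ * I ^ 2) * (pdx (pdy η)) q + ((-6 : ℂ) * (Real.sqrt 3 : ℂ)⁻¹ * I) * (tau1 q * ((pdx (pdy (pdy η))) q)) + (-6 : ℂ) * (pdx (pdx (pdy η))) q + ((2 : ℂ) * I) * (pdx (pdx (pdx η))) q + (2 : ℂ) * (tau1 q * ((pdx (pdx (pdx (pdy η)))) q)) + ((-12 : ℂ) * (Real.sqrt 3 : ℂ)⁻¹ * I) * (pdx φ) q + (12 : ℂ) * (pdx (pdy φ)) q + ((-12 : ℂ) * (Real.sqrt 3 : ℂ)⁻¹) * (tau1 q * ((pdx (pdy φ)) q)) + ((-12 : ℂ) * I) * (pdx (pdx φ)) q + ((12 : ℂ) * (Real.sqrt 3 : ℂ)⁻¹ * I) * (tau1 q * ((pdx (pdx φ)) q)) + (-12 : ℂ) * (tau1 q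 * ((pdx (pdx (pdy φ))) q)) + ((6 : ℂ) * (Real.sqrt 3 : ℂ)⁻¹) * (tau1 q * (tau1 q * ((pdx (pdx (pdy φ))) q))) + ((8 : ℂ) * I) * (tau1 q * ((pdx (pdx (pdx φ))) q)) + (4 : ℂ) * (tau1 q * (tau1 q * ((pdx (pdx (pdx (pdy φ)))) q)))) = 0 := by
    intro q hq
    rw [← e1y hφ hη q]
    exact cdy_zero_on hRel1 hq
  have hRel2f : EE2 φ η = fun _ => (0:ℂ) := funext hRel2
  have hRel2x : ∀ q : ℝ × ℝ, ((-1 : ℂ) * (pdy (pdy η)) q + ((2 : ℂ) * I) * (pdx (pdy η)) q + (-1 : ℂ) * (tau1 q * ((pdx (pdy (pdy η))) q)) + (1 : ℂ) * (pdx (pdx η)) q + (-1 : ℂ) * (tau1 q * ((pdx (pdx (pdx η))) q)) + (-3 : ℂ) * (pdx (pdx (pdx (pdx η)))) q + (1 : ℂ) * (tau1 q * ((pdx (pdx (pdx (pdx (pdx η))))) q))) = 0 := by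
    intro q
    rw [← e2x hφ hη q, hRel2f]
    exact cdx_zerofn q
  -- final computation at a point
  intro p hp
  have hu : tau1 p * (tau1 p)⁻¹ = 1 := mul_inv_cancel₀ hp
  have h1 := hRel1 p hp
  simp only [EE1] at h1
  have h1x := hRel1x p hp
  simp only [EE1x] at h1x
  have h1xx := hRel1xx p hp
  have h1y := hRel1y p hp
  have h2 := hRel2 p
  simp only [EE2] at h2
  have h2x := hRel2x p
  rw [hPhi]
  have eAB : cdx (PhiA φ η) = PhiB φ η := funext (phiAB hφ hη)
  have eBC : cdx (PhiB φ η) = PhiC φ η := funext (phiBC hφ hη)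
  rw [eAB, eBC, phiCD hφ hη p]
  rw [show (1:ℂ) / (tau1 p) ^ 2 = (tau1 p)⁻¹ * (tau1 p)⁻¹ by
    rw [one_div, pow_two, mul_inv]]
  simp only [PhiA, PhiB, PhiC]
  linear_combination (((((5 : ℂ)/2) * (tau1 p)⁻¹ ^ 3) * h1 + (((-3 : ℂ)/2) * (tau1 p)⁻¹ ^ 2 + ((1 : ℂ)/4) * (Real.sqrt 3 : ℂ)⁻¹ * (tau1 p)⁻¹) * h1x + (((1 : ℂ)/4) * (tau1 p)⁻¹) * h1xx + (((1 : ℂ)/4) * (Real.sqrt 3 : ℂ)⁻¹ * I * (tau1 p)⁻¹) * h1y + ((-1 : ℂ) * (tau1 p)⁻¹ ^ 2) * h2 + (((1 : ℂ)/2) * (tau1 p)⁻¹) * h2x + (((1 : ℂ)/2) * (Real.sqrt 3 : ℂ)⁻¹ * (pdx (pdx (pdx (pdx η)))) p + (-2 : ℂ) * (Real.sqrt 3 : ℂ)⁻¹ * (tau1 p)⁻¹ * (pdx (pdx (pdx η))) p + (2 : ℂ) * (Real.sqrt 3 : ℂ)⁻¹ * (tau1 p)⁻¹ * (pdx (pdx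 φ)) p + (2 : ℂ) * (Real.sqrt 3 : ℂ)⁻¹ * (tau1 p)⁻¹ ^ 2 * (pdx (pdx η)) p + (-4 : ℂ) * (Real.sqrt 3 : ℂ)⁻¹ * (tau1 p)⁻¹ ^ 2 * (pdx φ) p + ((1 : ℂ)/2) * (Real.sqrt 3 : ℂ)⁻¹ * tau1 p * (pdx (pdx (pdx (pdx φ)))) p + (-2 : ℂ) * (Real.sqrt 3 : ℂ)⁻¹ * tau1 p * (tau1 p)⁻¹ * (pdx (pdx (pdx φ))) p + (2 : ℂ) * (Real.sqrt 3 : ℂ)⁻¹ * tau1 p * (tau1 p)⁻¹ ^ 2 * (pdx (pdx φ)) p + ((1 : ℂ)/2) * (Real.sqrt 3 : ℂ)⁻¹ ^ 2 * (tau1 p)⁻¹ * (pdx (pdx η)) p + (-1 : ℂ) * (Real.sqrt 3 : ℂ)⁻¹ ^ 2 * (tau1 p)⁻¹ * (pdx φ) p + ((1 : ℂ)/2) * (Real.sqrt 3 : ℂ)⁻¹ ^ 2 * tau1 p ^ 2 * (tau1 p)⁻¹ * (pdx (pdx (pdx φ))) p + ((1 : ℂ)/2) * (Real.sqrt 3 :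 ℂ)⁻¹ ^ 2 * I * (tau1 p)⁻¹ * (pdx (pdy η)) p + ((-1 : ℂ)/2) * (Real.sqrt 3 : ℂ)⁻¹ ^ 2 * I * tau1 p * (tau1 p)⁻¹ * (pdx (pdx (pdy η))) p + (-1 : ℂ) * (Real.sqrt 3 : ℂ)⁻¹ ^ 2 * I * tau1 p * (tau1 p)⁻¹ * (pdx (pdy φ)) p + ((1 : ℂ)/2) * (Real.sqrt 3 : ℂ)⁻¹ ^ 2 * I * tau1 p ^ 2 * (tau1 p)⁻¹ * (pdx (pdx (pdy φ))) p + ((1 : ℂ)/2) * (Real.sqrt 3 : ℂ)⁻¹ ^ 2 * I ^ 2 * (tau1 p)⁻¹ * (pdy (pdy η)) p + (-1 : ℂ) * (Real.sqrt 3 : ℂ)⁻¹ ^ 2 * I ^ 2 * (tau1 p)⁻¹ * (pdx φ) p + ((-1 : ℂ)/2) * (Real.sqrt 3 : ℂ)⁻¹ ^ 2 * I ^ 2 * tau1 p * (tau1 p)⁻¹ * (pdx (pdy (pdy η))) p + (1 : ℂ) * (Real.sqrt 3 : ℂ)⁻¹ ^ 2 * I ^ 2 * tau1 p * (tau1 p)⁻¹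 * (pdx (pdx φ)) p + ((-1 : ℂ)/2) * (Real.sqrt 3 : ℂ)⁻¹ ^ 2 * I ^ 3 * (tau1 p)⁻¹ * (pdx (pdy η)) p) * hs2 + (((-1 : ℂ)/2) * (pdx (pdx (pdx η))) p + (1 : ℂ) * (pdx (pdx φ)) p + ((3 : ℂ)/2) * (tau1 p)⁻¹ * (pdx (pdx η)) p + (-1 : ℂ) * (tau1 p)⁻¹ * (pdx φ) p + (-2 : ℂ) * (tau1 p)⁻¹ ^ 2 * (pdx η) p + ((1 : ℂ)/2) * tau1 p * (pdx (pdx (pdx φ))) p + (-2 : ℂ) * tau1 p * (tau1 p)⁻¹ * (pdx (pdx φ)) p + (2 : ℂ) * tau1 p * (tau1 p)⁻¹ ^ 2 * (pdx φ) p + ((-1 : ℂ)/2) * tau1 p ^ 2 * (tau1 p)⁻¹ * (pdx (pdx (pdx φ))) p + ((-1 : ℂ)/2) * I * (pdx (pdx (pdy η))) p + (1 : ℂ) * I * (pdx (pdy φ)) p + ((3 : ℂ)/2) * I * (tau1 p)⁻¹ * (pdx (pdy η)) p + (-2 : ℂ) * I * (tau1 p)⁻¹ * (pdy φ) p + (-2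 : ℂ) * I * (tau1 p)⁻¹ ^ 2 * (pdy η) p + ((1 : ℂ)/2) * I * tau1 p * (pdx (pdx (pdy φ))) p + ((1 : ℂ)/2) * I * tau1 p * (tau1 p)⁻¹ * (pdx (pdx (pdy η))) p + (-1 : ℂ) * I * tau1 p * (tau1 p)⁻¹ * (pdx (pdy φ)) p + (2 : ℂ) * I * tau1 p * (tau1 p)⁻¹ ^ 2 * (pdy φ) p + ((-1 : ℂ)/2) * I * tau1 p ^ 2 * (tau1 p)⁻¹ * (pdx (pdx (pdy φ))) p + ((-1 : ℂ)/2) * I ^ 2 * (tau1 p)⁻¹ * (pdy (pdy η)) p + (1 : ℂ) * I ^ 2 * (tau1 p)⁻¹ * (pdx φ) p + ((1 : ℂ)/2) * I ^ 2 * tau1 p * (tau1 p)⁻¹ * (pdx (pdy (pdy η))) p + (-1 : ℂ) * I ^ 2 * tau1 p * (tau1 p)⁻¹ * (pdx (pdx φ)) p + ((1 : ℂ)/2) * I ^ 3 * (tau1 p)⁻¹ * (pdx (pdy η)) p + ((-1 : ℂ)/2) * (Real.sqrt 3 : ℂ) * (pdx (pdx (pdx (pdx η)))) p + (2 : ℂ)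 * (Real.sqrt 3 : ℂ) * (tau1 p)⁻¹ * (pdx (pdx (pdx η))) p + (-2 : ℂ) * (Real.sqrt 3 : ℂ) * (tau1 p)⁻¹ * (pdx (pdx φ)) p + (-2 : ℂ) * (Real.sqrt 3 : ℂ) * (tau1 p)⁻¹ ^ 2 * (pdx (pdx η)) p + (4 : ℂ) * (Real.sqrt 3 : ℂ) * (tau1 p)⁻¹ ^ 2 * (pdx φ) p + ((-1 : ℂ)/2) * (Real.sqrt 3 : ℂ) * tau1 p * (pdx (pdx (pdx (pdx φ)))) p + (2 : ℂ) * (Real.sqrt 3 : ℂ) * tau1 p * (tau1 p)⁻¹ * (pdx (pdx (pdx φ))) p + (-2 : ℂ) * (Real.sqrt 3 : ℂ) * tau1 p * (tau1 p)⁻¹ ^ 2 * (pdx (pdx φ)) p + ((-1 : ℂ)/2) * (Real.sqrt 3 : ℂ) * (Real.sqrt 3 : ℂ)⁻¹ * (tau1 p)⁻¹ * (pdx (pdx η)) p + (1 : ℂ) * (Real.sqrt 3 : ℂ) * (Real.sqrt 3 : ℂ)⁻¹ * (tau1 p)⁻¹ * (pdx φ) p + ((-1 : ℂ)/2) * (Real.sqrt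 3 : ℂ) * (Real.sqrt 3 : ℂ)⁻¹ * tau1 p ^ 2 * (tau1 p)⁻¹ * (pdx (pdx (pdx φ))) p + ((-1 : ℂ)/2) * (Real.sqrt 3 : ℂ) * (Real.sqrt 3 : ℂ)⁻¹ * I * (tau1 p)⁻¹ * (pdx (pdy η)) p + ((1 : ℂ)/2) * (Real.sqrt 3 : ℂ) * (Real.sqrt 3 : ℂ)⁻¹ * I * tau1 p * (tau1 p)⁻¹ * (pdx (pdx (pdy η))) p + (1 : ℂ) * (Real.sqrt 3 : ℂ) * (Real.sqrt 3 : ℂ)⁻¹ * I * tau1 p * (tau1 p)⁻¹ * (pdx (pdy φ)) p + ((-1 : ℂ)/2) * (Real.sqrt 3 : ℂ) * (Real.sqrt 3 : ℂ)⁻¹ * I * tau1 p ^ 2 * (tau1 p)⁻¹ * (pdx (pdx (pdy φ))) p + ((-1 : ℂ)/2) * (Real.sqrt 3 : ℂ) * (Real.sqrt 3 : ℂ)⁻¹ * I ^ 2 * (tau1 p)⁻¹ * (pdy (pdy η)) p + (1 : ℂ) * (Real.sqrt 3 : ℂ) * (Real.sqrt 3 : ℂ)⁻¹ * I ^ 2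 * (tau1 p)⁻¹ * (pdx φ) p + ((1 : ℂ)/2) * (Real.sqrt 3 : ℂ) * (Real.sqrt 3 : ℂ)⁻¹ * I ^ 2 * tau1 p * (tau1 p)⁻¹ * (pdx (pdy (pdy η))) p + (-1 : ℂ) * (Real.sqrt 3 : ℂ) * (Real.sqrt 3 : ℂ)⁻¹ * I ^ 2 * tau1 p * (tau1 p)⁻¹ * (pdx (pdx φ)) p + ((1 : ℂ)/2) * (Real.sqrt 3 : ℂ) * (Real.sqrt 3 : ℂ)⁻¹ * I ^ 3 * (tau1 p)⁻¹ * (pdx (pdy η)) p) * hw + (((-1 : ℂ)/2) * (tau1 p)⁻¹ * (pdy (pdy η)) p + (1 : ℂ) * (tau1 p)⁻¹ * (pdx φ) p + ((1 : ℂ)/2) * tau1 p * (tau1 p)⁻¹ * (pdx (pdy (pdy η))) p + (-1 : ℂ) * tau1 p * (tau1 p)⁻¹ * (pdx (pdx φ)) p + ((1 : ℂ)/2) * I * (tau1 p)⁻¹ * (pdx (pdy η)) p + ((-1 : ℂ)/2) * (Real.sqrt 3 : ℂ)⁻¹ * (tau1 p)⁻¹ * (pdx (pdx (pdx η))) p +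 (3 : ℂ) * (Real.sqrt 3 : ℂ)⁻¹ * (tau1 p)⁻¹ * (pdx (pdx φ)) p + (-2 : ℂ) * (Real.sqrt 3 : ℂ)⁻¹ * tau1 p * (tau1 p)⁻¹ * (pdx (pdx (pdx φ))) p) * Complex.I_mul_I + (((1 : ℂ)/2) * (pdx (pdx (pdx η))) p + (-1 : ℂ) * (pdx (pdx (pdx (pdx (pdx η))))) p + (-1 : ℂ) * (pdx (pdx φ)) p + (-1 : ℂ) * (pdx (pdx (pdx (pdx φ)))) p + (-1 : ℂ) * (tau1 p)⁻¹ * (pdy (pdy η)) p + (-1 : ℂ) * (tau1 p)⁻¹ * (pdx (pdx η)) p + (4 : ℂ) * (tau1 p)⁻¹ * (pdx (pdx (pdx (pdx η)))) p + (2 : ℂ) * (tau1 p)⁻¹ * (pdx φ) p + (-1 : ℂ) * (tau1 p)⁻¹ * (pdx (pdx (pdx φ))) p + (-5 : ℂ) * (tau1 p)⁻¹ ^ 2 * (pdx (pdx (pdx η))) p + (15 : ℂ) * (tau1 p)⁻¹ ^ 2 * (pdx (pdx φ)) p + ((-1 : ℂ)/2) * tau1 p * (pdx (pdx (pdx φ)))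 p + (-1 : ℂ) * tau1 p * (pdx (pdx (pdx (pdx (pdx φ))))) p + (6 : ℂ) * tau1 p * (tau1 p)⁻¹ * (pdx (pdx (pdx (pdx φ)))) p + (-10 : ℂ) * tau1 p * (tau1 p)⁻¹ ^ 2 * (pdx (pdx (pdx φ))) p + ((1 : ℂ)/2) * I * (pdx (pdx (pdy η))) p + (-1 : ℂ) * I * (pdx (pdy φ)) p + (2 : ℂ) * I * (tau1 p)⁻¹ * (pdy φ) p + ((-1 : ℂ)/2) * I * tau1 p * (pdx (pdx (pdy φ))) p + ((-1 : ℂ)/2) * (Real.sqrt 3 : ℂ)⁻¹ * (pdx (pdx (pdx (pdx η)))) p + (-3 : ℂ) * (Real.sqrt 3 : ℂ)⁻¹ * (pdx (pdx (pdx φ))) p + (6 : ℂ) * (Real.sqrt 3 : ℂ)⁻¹ * (tau1 p)⁻¹ * (pdx (pdx φ)) p + (15 : ℂ) * (Real.sqrt 3 : ℂ)⁻¹ * (tau1 p)⁻¹ ^ 2 * (pdx φ) p + ((-5 : ℂ)/2) * (Real.sqrt 3 : ℂ)⁻¹ * tau1 p * (pdx (pdx (pdx (pdx φ)))) p + (9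 : ℂ) * (Real.sqrt 3 : ℂ)⁻¹ * tau1 p * (tau1 p)⁻¹ * (pdx (pdx (pdx φ))) p + (-15 : ℂ) * (Real.sqrt 3 : ℂ)⁻¹ * tau1 p * (tau1 p)⁻¹ ^ 2 * (pdx (pdx φ)) p + (1 : ℂ) * (Real.sqrt 3 : ℂ)⁻¹ * I * (pdx (pdx (pdx (pdy η)))) p + (-3 : ℂ) * (Real.sqrt 3 : ℂ)⁻¹ * I * (pdx (pdx (pdy φ))) p + (-9 : ℂ) * (Real.sqrt 3 : ℂ)⁻¹ * I * (tau1 p)⁻¹ * (pdx (pdx (pdy η))) p + (15 : ℂ) * (Real.sqrt 3 : ℂ)⁻¹ * I * (tau1 p)⁻¹ * (pdx (pdy φ)) p + (15 : ℂ) * (Real.sqrt 3 : ℂ)⁻¹ * I * (tau1 p)⁻¹ ^ 2 * (pdx (pdy η)) p + (-15 : ℂ) * (Real.sqrt 3 : ℂ)⁻¹ * I * (tau1 p)⁻¹ ^ 2 * (pdy φ) p + (-1 : ℂ) * (Real.sqrt 3 : ℂ)⁻¹ * I * tau1 p * (pdx (pdx (pdx (pdy φ)))) p) * hu))
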